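/- Let λ_1 ≥ λ_2 ≥ … ≥ λ_N ≥ 0 be the eigenvalues of a symmetric PSD matrix S, and let r > 0, c ≥ 0, v ∈ R^N. Then Σ_{j=1}^N λ_j(S + c vvᵀ) / (r + λ_j(S + c vvᵀ))² ≤ 1/(4r) + 2·Σ_{j=1}^N λ_j(S) / (r + λ_j(S))². -/

import Mathlib

open Matrix

lemma trace_formula {N : ℕ} {A : Matrix (Fin N) (Fin N) ℝ} (hA : A.IsHermitian)
    (r : ℝ) (hpos : ∀ i, 0 < r + hA.eigenvalues i) :
    ((r • (1 : Matrix (Fin N) (Fin N) ℝ) + A)⁻¹).trace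
      - r * (((r • (1 : Matrix (Fin N) (Fin N) ℝ) + A)⁻¹ * (r • (1 : Matrix (Fin N) (Fin N) ℝ) + A)⁻¹)).trace
      = ∑ j, hA.eigenvalues j / (r + hA.eigenvalues j) ^ 2 := by
  set μ := hA.eigenvalues with hμ
  set U : Matrix (Fin N) (Fin N) ℝ := (hA.eigenvectorUnitary : Matrix (Fin N) (Fin N) ℝ) with hU
  have hU2 : star U * U = 1 := (Matrix.mem_unitaryGroup_iff').mp (hA.eigenvectorUnitary).2
  have hU1 : U * star U = 1 := (Matrix.mem_unitaryGroup_iff).mp (hA.eigenvectorUnitary).2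
  have key : ∀ X : Matrix (Fin N) (Fin N) ℝ, star U * (U * X) = X := fun X => by
    rw [← mul_assoc, hU2, one_mul]
  have hB : r • (1 : Matrix (Fin N) (Fin N) ℝ) + A
      = U * diagonal (fun i => r + μ i) * star U := by
    conv_lhs => rw [hA.spectral_theorem]
    simp only [Unitary.conjStarAlgAut_apply, Unitary.coe_star, ← hμ]
    have h1 : (r • (1 : Matrix (Fin N) (Fin N) ℝ)) = U * (r • (1 : Matrix (Fin N) (Fin N) ℝ)) * star U := by
      rw [mul_smul_comm, mul_one, smul_mul_assoc, hU1]
    rw [h1, ← Matrix.add_mul, ← Matrix.mul_add]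
    congr 2
    simp [smul_one_eq_diagonal, diagonal_add]
  set E : Matrix (Fin N) (Fin N) ℝ := diagonal (fun i => (r + μ i)⁻¹) with hE
  have hED : E * diagonal (fun i => r + μ i) = 1 := by
    rw [hE, diagonal_mul_diagonal]
    have : (fun i => (r + μ i)⁻¹ * (r + μ i)) = fun _ => (1:ℝ) := by
      funext i; exact inv_mul_cancel₀ (hpos i).ne'
    rw [this, diagonal_one]
  have hinv : (r • (1 : Matrix (Fin N) (Fin N) ℝ) + A)⁻¹ = U * E * star U := by
    apply Matrix.inv_eq_left_inv
    rw [hB]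
    simp only [mul_assoc]
    rw [key, ← mul_assoc E, hED, one_mul, hU1]
  have htr : ∀ D : Matrix (Fin N) (Fin N) ℝ, (U * D * star U).trace = D.trace := by
    intro D
    rw [trace_mul_cycle, hU2, one_mul]
  have hsq : (U * E * star U) * (U * E * star U) = U * (E * E) * star U := by
    simp only [mul_assoc]
    rw [key]
  rw [hinv, hsq, htr, htr, hE, diagonal_mul_diagonal, trace_diagonal, trace_diagonal,
    Finset.mul_sum, ← Finset.sum_sub_distrib]
  apply Finset.sum_congr rfl
  intro i _
  have h : r + μ i ≠ 0 := (hpos i).ne'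
  rw [pow_two, eq_div_iff (mul_ne_zero h h)]
  field_simp
  ring

lemma mul_vecMulVec' {N : ℕ} (M : Matrix (Fin N) (Fin N) ℝ) (a b : Fin N → ℝ) :
    M * vecMulVec a b = vecMulVec (M *ᵥ a) b := by
  ext i j
  simp only [mul_apply, vecMulVec_apply, mulVec, dotProduct]
  rw [Finset.sum_mul]
  exact Finset.sum_congr rfl fun k _ => by ring

lemma vecMulVec_mul' {N : ℕ} (M : Matrix (Fin N) (Fin N) ℝ) (a b : Fin N → ℝ) :
    vecMulVec a b * M = vecMulVec a (Mᵀ *ᵥ b) := by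
  ext i j
  simp only [mul_apply, vecMulVec_apply, mulVec, dotProduct, transpose_apply]
  rw [Finset.mul_sum]
  exact Finset.sum_congr rfl fun k _ => by ring

lemma trace_vecMulVec' {N : ℕ} (a b : Fin N → ℝ) :
    (vecMulVec a b).trace = a ⬝ᵥ b := by
  simp [trace, vecMulVec_apply, dotProduct, Matrix.diag]

lemma vecMulVec_mul_vecMulVec' {N : ℕ} (a b c d : Fin N → ℝ) :
    vecMulVec a b * vecMulVec c d = (b ⬝ᵥ c) • vecMulVec a d := by
  ext i j
  simp only [mul_apply, vecMulVec_apply, Matrix.smul_apply, dotProduct, smul_eq_mul]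
  rw [Finset.sum_mul]
  exact Finset.sum_congr rfl fun k _ => by ring

/-- for PSD `S`, `r > 0`, `c ≥ 0`, `v ∈ ℝ^N`,
`Σ_j λ_j(S + c vvᵀ)/(r + λ_j(S + c vvᵀ))² ≤ 1/(4r) + 2 Σ_j λ_j(S)/(r + λ_j(S))²`. -/
theorem variance_sum_rank_one {N : ℕ} (S : Matrix (Fin N) (Fin N) ℝ)
    (hS : S.PosSemidef) (v : Fin N → ℝ) (r c : ℝ) (hr : 0 < r) (hc : 0 ≤ c)
    (hS' : (S + c • Matrix.vecMulVec v v).IsHermitian) :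
    ∑ j, hS'.eigenvalues j / (r + hS'.eigenvalues j) ^ 2 ≤
      1 / (4 * r) + 2 * ∑ j, hS.isHermitian.eigenvalues j /
        (r + hS.isHermitian.eigenvalues j) ^ 2 := by
  classical
  -- positive semidefiniteness of the rank-one update
  have hvv : (Matrix.vecMulVec v v).PosSemidef := by
    rw [vecMulVec_eq (Fin 1)]
    have hcol : replicateCol (Fin 1) v = (replicateRow (Fin 1) v)ᴴ := by
      rw [conjTranspose_replicateRow, star_trivial]
    rw [hcol]
    exact posSemidef_conjTranspose_mul_self _
  have hcvv : (c • Matrix.vecMulVec v v).PosSemidef := by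
    refine .of_dotProduct_mulVec_nonneg ?_ ?_
    · simpa using hS'.sub hS.isHermitian
    · intro x
      rw [smul_mulVec, dotProduct_smul, smul_eq_mul]
      exact mul_nonneg hc (hvv.dotProduct_mulVec_nonneg x)
  have hApsd : (S + c • Matrix.vecMulVec v v).PosSemidef := hS.add hcvv
  -- B := r • 1 + S is positive definite
  have h1pd : (r • (1 : Matrix (Fin N) (Fin N) ℝ)).PosDef := by
    rw [smul_one_eq_diagonal]
    exact posDef_diagonal_iff.mpr fun _ => hr
  have hBpd : (r • (1 : Matrix (Fin N) (Fin N) ℝ) + S).PosDef := h1pd.add_posSemidef hS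
  set B := r • (1 : Matrix (Fin N) (Fin N) ℝ) + S with hBdef
  set R := B⁻¹ with hRdef
  have hdet : IsUnit B.det := hBpd.det_pos.ne'.isUnit
  have hBR : B * R = 1 := mul_nonsing_inv B hdet
  have hRB : R * B = 1 := nonsing_inv_mul B hdet
  have hRpsd : R.PosSemidef := hBpd.inv.posSemidef
  have hRsym : Rᵀ = R := hRpsd.isHermitian
  set w := R *ᵥ v with hwdef
  set u := R *ᵥ w with hudef
  set q := v ⬝ᵥ w with hqdef
  set p := w ⬝ᵥ w with hpdef
  set s := w ⬝ᵥ u with hsdef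
  have hq : 0 ≤ q := by simpa using hRpsd.dotProduct_mulVec_nonneg v
  have hp : 0 ≤ p := by
    have : (0:ℝ) ≤ w ⬝ᵥ w :=
      Finset.sum_nonneg fun i _ => mul_self_nonneg (w i)
    simpa [hpdef] using this
  have hcq : (0:ℝ) < 1 + c * q := by positivity
  set k := c / (1 + c * q) with hkdef
  have hk : 0 ≤ k := div_nonneg hc hcq.le
  have hkc : k * (1 + c * q) = c := div_mul_cancel₀ c hcq.ne'
  -- Sherman–Morrison
  have hRvv : vecMulVec v v * R = vecMulVec v w := by
    rw [vecMulVec_mul', hRsym, hwdef]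
  have hBw : B *ᵥ w = v := by rw [hwdef, mulVec_mulVec, hBR, one_mulVec]
  have hBu : B *ᵥ u = w := by rw [hudef, mulVec_mulVec, hBR, one_mulVec]
  set X := R - k • vecMulVec w w with hXdef
  have hSM : (r • (1 : Matrix (Fin N) (Fin N) ℝ) + (S + c • Matrix.vecMulVec v v)) * X = 1 := by
    have hB' : r • (1 : Matrix (Fin N) (Fin N) ℝ) + (S + c • Matrix.vecMulVec v v)
        = B + c • vecMulVec v v := by rw [hBdef, add_assoc]
    rw [hB', hXdef, Matrix.add_mul, Matrix.mul_sub, Matrix.mul_sub, hBR,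
      Matrix.mul_smul, Matrix.mul_smul, Matrix.smul_mul, Matrix.smul_mul,
      mul_vecMulVec', hBw, hRvv, vecMulVec_mul_vecMulVec']
    rw [← hqdef]
    have hz : c - (k + k * c * q) = 0 := by linear_combination -hkc
    have hmod : (1 : Matrix (Fin N) (Fin N) ℝ) - k • vecMulVec v w +
        (c • vecMulVec v w - k • c • q • vecMulVec v w)
        = 1 + (c - (k + k * c * q)) • vecMulVec v w := by module
    rw [hmod, hz, zero_smul, add_zero]
  have hinv' : (r • (1 : Matrix (Fin N) (Fin N) ℝ) + (S + c • Matrix.vecMulVec v v))⁻¹ = X :=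
    inv_eq_right_inv hSM
  -- traces
  have htrX : X.trace = R.trace - k * p := by
    rw [hXdef, trace_sub, trace_smul, trace_vecMulVec', ← hpdef, smul_eq_mul]
  have e1 : R * vecMulVec w w = vecMulVec u w := by rw [mul_vecMulVec', hudef]
  have e2 : vecMulVec w w * R = vecMulVec w u := by rw [vecMulVec_mul', hRsym, hudef]
  have e3 : vecMulVec w w * vecMulVec w w = p • vecMulVec w w := by
    rw [vecMulVec_mul_vecMulVec', hpdef]
  have hXXeq : X * X = R * R - k • vecMulVec u w - k • vecMulVec w u
      + (k * (k * p)) • vecMulVec w w := by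
    simp only [hXdef, Matrix.sub_mul, Matrix.mul_sub, Matrix.smul_mul, Matrix.mul_smul,
      e1, e2, e3]
    module
  have htrXX : (X * X).trace = (R * R).trace - 2 * k * s + k * k * (p * p) := by
    rw [hXXeq, trace_add, trace_sub, trace_sub, trace_smul, trace_smul, trace_smul,
      trace_vecMulVec', trace_vecMulVec', trace_vecMulVec', dotProduct_comm u w,
      ← hsdef, ← hpdef]
    simp only [smul_eq_mul]
    ring
  -- the inequality r * s ≤ p
  have hw_eq : w = r • u + S *ᵥ u := by
    rw [← hBu, hBdef, add_mulVec, smul_mulVec, one_mulVec]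
  have hps : p - r * s = w ⬝ᵥ (S *ᵥ u) := by
    have h1 : w ⬝ᵥ (w - r • u) = p - r * s := by
      rw [dotProduct_sub, dotProduct_smul, ← hpdef, ← hsdef, smul_eq_mul]
    have h2 : w - r • u = S *ᵥ u := by rw [hw_eq]; abel
    rw [← h1, h2]
  have hrs : r * s ≤ p := by
    have h3 : (0:ℝ) ≤ w ⬝ᵥ (S *ᵥ u) := by
      rw [hw_eq, add_dotProduct, smul_dotProduct]
      have h4 : (0:ℝ) ≤ u ⬝ᵥ (S *ᵥ u) := by simpa using hS.dotProduct_mulVec_nonneg u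
      have h5 : (0:ℝ) ≤ (S *ᵥ u) ⬝ᵥ (S *ᵥ u) :=
        Finset.sum_nonneg fun i _ => mul_self_nonneg _
      rw [smul_eq_mul]
      exact add_nonneg (mul_nonneg hr.le h4) h5
    linarith [hps ▸ h3]
  -- eigenvalue positivity
  have hpos' : ∀ i, 0 < r + hS'.eigenvalues i := fun i =>
    add_pos_of_pos_of_nonneg hr (hApsd.eigenvalues_nonneg i)
  have hposS : ∀ i, 0 < r + hS.isHermitian.eigenvalues i := fun i =>
    add_pos_of_pos_of_nonneg hr (hS.eigenvalues_nonneg i)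
  have hL := trace_formula hS' r hpos'
  have hR := trace_formula hS.isHermitian r hposS
  rw [← hL, ← hR]
  have hRid : (r • (1 : Matrix (Fin N) (Fin N) ℝ) + S)⁻¹ = R := rfl
  rw [hinv', hRid, htrX, htrXX]
  -- final scalar inequality
  have hTS : 0 ≤ R.trace - r * (R * R).trace := by
    rw [hRid] at hR
    rw [hR]
    exact Finset.sum_nonneg fun j _ =>
      div_nonneg (hS.eigenvalues_nonneg j) (sq_nonneg _)
  have key : k * p - r * (k * p) ^ 2 ≤ 1 / (4 * r) := by
    rw [le_div_iff₀ (by positivity)]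
    nlinarith [sq_nonneg (2 * r * (k * p) - 1)]
  nlinarith [key, hTS, mul_nonneg hk (sub_nonneg.mpr hrs), mul_nonneg (mul_nonneg hr.le hk) (sub_nonneg.mpr hrs)]
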